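/- Let A ∈ ℝ^{n_o × n_o} be a symmetric matrix with nonnegative entries whose row sums are strictly positive, and let D be the diagonal matrix with D_{ii} = ∑_j A_{ij}. Let Z ∈ {0,1}^{n_o × n_c} be a cluster-indicator matrix (each entry 0 or 1, each row sums to 1, each column contains at least one 1), inducing the partition O_1, …, O_{n_c} of the index set O = {1, …, n_o} with O_c = {i : z_{ic} = 1}. Let V := Z (Zᵀ D Z)^{−1/2}. Then ∑_{c=1}^{n_c} normCut(O_c, O ∖ O_c) = n_c − Tr(Vᵀ A V), where normCut(O₁, O₂) := (∑_{i ∈ O₁, j ∈ O₂} A_{ij}) / (∑_{i ∈ O₁, j ∈ O} A_{ij}). Consequently, minimizing the average normalized cut (1/n_c) ∑_c normCut(O_c, O ∖ O_c) over partitions is equivalent to maximizing (1/n_c) Tr(Vᵀ A V). -/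
import Mathlib


open Matrix

/-- For a nonnegative symmetric affinity matrix `A` with positive row sums and a
cluster-indicator matrix `Z` inducing the partition `O_1, …, O_{n_c}`, the sum of
normalized cuts equals `n_c − Tr(Vᵀ A V)` with `V = Z (Zᵀ D Z)^{−1/2}`; consequently
the average normalized cut is `1 − (1/n_c) Tr(Vᵀ A V)`. -/
theorem normalized_cut_trace_identity
    (n_o n_c : ℕ) (hnc : 1 ≤ n_c)
    (A : Matrix (Fin n_o) (Fin n_o) ℝ) (hAsym : A.IsSymm)
    (hAnn : ∀ i j, 0 ≤ A i j) (hdeg : ∀ i, 0 < ∑ j, A i j)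
    (Z : Matrix (Fin n_o) (Fin n_c) ℝ)
    (hZ01 : ∀ i c, Z i c = 0 ∨ Z i c = 1)
    (hrow : ∀ i, ∑ c, Z i c = 1)
    (hcol : ∀ c, ∃ i, Z i c = 1)
    (O : Fin n_c → Finset (Fin n_o))
    (hO : ∀ c, O c = Finset.univ.filter (fun i => Z i c = 1))
    (normCut : Finset (Fin n_o) → Finset (Fin n_o) → ℝ)
    (hcut : ∀ O₁ O₂ : Finset (Fin n_o), normCut O₁ O₂ =
        (∑ i ∈ O₁, ∑ j ∈ O₂, A i j) / (∑ i ∈ O₁, ∑ j, A i j))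
    (D : Matrix (Fin n_o) (Fin n_o) ℝ)
    (hD : D = Matrix.diagonal fun i => ∑ j, A i j)
    (V : Matrix (Fin n_o) (Fin n_c) ℝ)
    (hV : V = Z * Matrix.diagonal fun c => (Real.sqrt ((Zᵀ * D * Z) c c))⁻¹) :
    (∑ c, normCut (O c) (Finset.univ \ O c) = n_c - (Vᵀ * A * V).trace) ∧
    ((1 / (n_c : ℝ)) * ∑ c, normCut (O c) (Finset.univ \ O c)
        = 1 - (1 / (n_c : ℝ)) * (Vᵀ * A * V).trace) := by
  classical
  set d : Fin n_o → ℝ := fun i => ∑ j, A i j with hd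
  have hmem : ∀ c i, i ∈ O c ↔ Z i c = 1 := by
    intro c i; rw [hO c]; simp
  -- s c = (Zᵀ D Z) c c = ∑ i ∈ O c, d i
  have hs : ∀ c, (Zᵀ * D * Z) c c = ∑ i ∈ O c, d i := by
    intro c
    rw [Matrix.mul_apply]
    simp only [hD, Matrix.mul_diagonal, Matrix.transpose_apply]
    rw [hO c, Finset.sum_filter]
    apply Finset.sum_congr rfl
    intro j _
    rcases hZ01 j c with h | h <;> simp [h, hd]
  have hspos : ∀ c, 0 < (Zᵀ * D * Z) c c := by
    intro c
    rw [hs c]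
    obtain ⟨i, hi⟩ := hcol c
    apply Finset.sum_pos
    · intro j hj; exact hdeg j
    · exact ⟨i, (hmem c i).2 hi⟩
  -- W c = (Zᵀ A Z) c c = within-cluster weight
  have hW : ∀ c, (Zᵀ * A * Z) c c = ∑ i ∈ O c, ∑ j ∈ O c, A i j := by
    intro c
    simp only [Matrix.mul_apply, Matrix.transpose_apply, Finset.sum_mul]
    rw [Finset.sum_comm]
    rw [hO c, Finset.sum_filter]
    apply Finset.sum_congr rfl
    intro i _
    rcases hZ01 i c with h | h
    · simp [h]
    · simp only [h, if_true, one_mul, Finset.sum_filter]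
      apply Finset.sum_congr rfl
      intro j _
      rcases hZ01 j c with h' | h' <;> simp [h']
  -- trace
  have htr : (Vᵀ * A * V).trace = ∑ c, (Zᵀ * A * Z) c c / (Zᵀ * D * Z) c c := by
    rw [Matrix.trace]
    apply Finset.sum_congr rfl
    intro c _
    have hVT : Vᵀ = (Matrix.diagonal fun c => (Real.sqrt ((Zᵀ * D * Z) c c))⁻¹) * Zᵀ := by
      rw [hV, Matrix.transpose_mul, Matrix.diagonal_transpose]
    rw [Matrix.diag_apply, hVT, hV]
    have heq : (Matrix.diagonal fun c => (Real.sqrt ((Zᵀ * D * Z) c c))⁻¹) * Zᵀ * A *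
        (Z * Matrix.diagonal fun c => (Real.sqrt ((Zᵀ * D * Z) c c))⁻¹)
        = (Matrix.diagonal fun c => (Real.sqrt ((Zᵀ * D * Z) c c))⁻¹) * (Zᵀ * A * Z) *
          (Matrix.diagonal fun c => (Real.sqrt ((Zᵀ * D * Z) c c))⁻¹) := by
      simp only [Matrix.mul_assoc]
    rw [heq, Matrix.mul_diagonal, Matrix.diagonal_mul]
    have h0 : (0:ℝ) ≤ (Zᵀ * D * Z) c c := (hspos c).le
    have hsne : Real.sqrt ((Zᵀ * D * Z) c c) ≠ 0 := by
      have := hspos c; positivity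
    have hinv : (Real.sqrt ((Zᵀ * D * Z) c c))⁻¹ * (Real.sqrt ((Zᵀ * D * Z) c c))⁻¹
        = ((Zᵀ * D * Z) c c)⁻¹ := by
      rw [← mul_inv, Real.mul_self_sqrt h0]
    rw [div_eq_mul_inv, ← hinv]
    ring
  -- normCut term
  have hterm : ∀ c, normCut (O c) (Finset.univ \ O c)
      = 1 - (Zᵀ * A * Z) c c / (Zᵀ * D * Z) c c := by
    intro c
    rw [hcut, hW, hs]
    have hnum : ∑ i ∈ O c, ∑ j ∈ Finset.univ \ O c, A i j
        = (∑ i ∈ O c, d i) - ∑ i ∈ O c, ∑ j ∈ O c, A i j := by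
      rw [← Finset.sum_sub_distrib]
      apply Finset.sum_congr rfl
      intro i _
      rw [Finset.sum_sdiff_eq_sub (Finset.subset_univ _)]
    rw [hnum]
    have hsne : (∑ i ∈ O c, d i) ≠ 0 := by
      have := hspos c; rw [hs c] at this; exact this.ne'
    field_simp
  have hmain : ∑ c, normCut (O c) (Finset.univ \ O c) = n_c - (Vᵀ * A * V).trace := by
    rw [htr]
    rw [Finset.sum_congr rfl (fun c _ => hterm c)]
    rw [Finset.sum_sub_distrib]
    simp
  refine ⟨hmain, ?_⟩
  rw [hmain]
  have hncne : (n_c : ℝ) ≠ 0 := by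
    have : 0 < n_c := hnc
    positivity
  field_simp
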